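/- The chain of 3 vertices fails CD_2(0,d) for every d > 0: with X = {y, x, z}, edges (x,y), (x,z), and the nonnegative function u with u(x)=1, u(y)=3/2, u(z)=0, the pressure v = 2u satisfies −Lv(x) = 1 > 0, −Lv(y) = 1 ≤ −Lv(x), −Lv(z) = −2 ≤ −Lv(x), yet 𝒟₂(u)(x) = 12u(x)² − 6u(y)² − 6u(z)² = −3/2 < 0. -/

import Mathlib

inductive ChV : Type
  | x | y | z
  deriving DecidableEq

instance : Fintype ChV :=
  ⟨{ChV.x, ChV.y, ChV.z}, fun a => by cases a <;> decide⟩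

open ChV in
def chK : ChV → ChV → ℝ
  | .x, .y => 1
  | .y, .x => 1
  | .x, .z => 1
  | .z, .x => 1
  | _, _ => 0

noncomputable def chL (f : ChV → ℝ) (w : ChV) : ℝ :=
  ∑ w' : ChV, chK w w' * (f w' - f w)

open ChV in
lemma chL_expand (f : ChV → ℝ) (w : ChV) :
    chL f w = chK w x * (f x - f w) + chK w y * (f y - f w) + chK w z * (f z - f w) := by
  rw [chL, show (Finset.univ : Finset ChV) = {x, y, z} from by decide,
    Finset.sum_insert (by decide), Finset.sum_insert (by decide), Finset.sum_singleton]
  ring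

open ChV in
theorem chain3_fails_CD2 (u : ChV → ℝ) (hux : u x = 1) (huy : u y = 3 / 2)
    (huz : u z = 0) :
    -chL (fun w => 2 * u w) x = 1 ∧
    -chL (fun w => 2 * u w) y ≤ -chL (fun w => 2 * u w) x ∧
    -chL (fun w => 2 * u w) z ≤ -chL (fun w => 2 * u w) x ∧
    2 * chL (fun w => (u w) ^ 2) y + 2 * chL (fun w => (u w) ^ 2) z
      - 4 * chL (fun w => (u w) ^ 2) x = -(3 / 2) ∧
    ∀ d : ℝ, 0 < d →
      ¬ (2 * chL (fun w => (u w) ^ 2) y + 2 * chL (fun w => (u w) ^ 2) z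
            - 4 * chL (fun w => (u w) ^ 2) x
          ≥ (1 / d) * (-chL (fun w => 2 * u w) x) ^ 2) := by
  simp only [chL_expand, chK, hux, huy, huz]
  norm_num
  intro d hd
  have : 0 < d⁻¹ := by positivity
  linarith
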